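/- Let G₂ be the derivation on Q[x,y] with D_{G₂}(x) = y and D_{G₂}(y) = 1. Then for n ≥ 1, (x·D_{G₂})^n(x) = Σ_{i=1}^{⌊(n+2)/2⌋} S(n,i) x^i y^{n+2-2i}, where S(n,i) is the number of increasing 0-1-2 trees on {0,1,…,n} with i leaves; equivalently, the polynomial sequence P_n := (x·D_{G₂})^n(x) satisfies P_0 = x and P_{n+1} = x·D_{G₂}(P_n), with P_n|_{y=1} equal to the André polynomial S_n(x). -/

import Mathlib

open MvPolynomial Finset Polynomial


theorem andre_coeff_rec (S : ℕ → Polynomial ℚ)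
    (hSrec : ∀ m : ℕ, 1 ≤ m → S (m + 1) =
        Polynomial.C ((m + 2 : ℕ) : ℚ) * (Polynomial.X * S m)
          + Polynomial.X * (1 - 2 * Polynomial.X) * Polynomial.derivative (S m))
    (m : ℕ) (hm : 1 ≤ m) (i : ℕ) :
    (S (m+1)).coeff (i+1)
      = ((m:ℚ)+2-2*i) * (S m).coeff i + ((i:ℚ)+1) * (S m).coeff (i+1) := by
  have hC2 : (Polynomial.C (2:ℚ)) = 2 := map_ofNat _ 2
  have h2 : Polynomial.X * (1 - 2 * Polynomial.X) * Polynomial.derivative (S m)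
      = Polynomial.X * Polynomial.derivative (S m)
        - Polynomial.C (2:ℚ) * (Polynomial.X * (Polynomial.X * Polynomial.derivative (S m))) := by
    rw [hC2]; ring
  rw [hSrec m hm, h2, Polynomial.coeff_add, Polynomial.coeff_sub, Polynomial.coeff_C_mul, Polynomial.coeff_C_mul, Polynomial.coeff_X_mul, Polynomial.coeff_X_mul]
  rcases i with _ | j
  · simp only [Polynomial.coeff_X_mul, Polynomial.coeff_X_mul_zero, Polynomial.coeff_derivative]
    push_cast
    ring
  · simp only [Polynomial.coeff_X_mul, Polynomial.coeff_derivative]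
    push_cast
    ring

theorem andre_coeff_zero (S : ℕ → Polynomial ℚ)
    (hS1 : S 1 = Polynomial.X)
    (hSrec : ∀ m : ℕ, 1 ≤ m → S (m + 1) =
        Polynomial.C ((m + 2 : ℕ) : ℚ) * (Polynomial.X * S m)
          + Polynomial.X * (1 - 2 * Polynomial.X) * Polynomial.derivative (S m))
    (n : ℕ) (hn : 1 ≤ n) : (S n).coeff 0 = 0 := by
  rcases n with _ | _ | m
  · omega
  · simp [hS1]
  · rw [hSrec (m+1) (by omega)]
    simp only [Polynomial.coeff_add, Polynomial.coeff_C_mul, Polynomial.coeff_X_mul_zero, mul_zero, zero_add]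
    have : Polynomial.X * (1 - 2 * Polynomial.X) * Polynomial.derivative (S (m+1))
        = Polynomial.X * ((1 - 2 * Polynomial.X) * Polynomial.derivative (S (m+1))) := by ring
    rw [this, Polynomial.coeff_X_mul_zero]

theorem andre_coeff_vanish (S : ℕ → Polynomial ℚ)
    (hS1 : S 1 = Polynomial.X)
    (hSrec : ∀ m : ℕ, 1 ≤ m → S (m + 1) =
        Polynomial.C ((m + 2 : ℕ) : ℚ) * (Polynomial.X * S m)
          + Polynomial.X * (1 - 2 * Polynomial.X) * Polynomial.derivative (S m))
    (n : ℕ) (hn : 1 ≤ n) : ∀ i : ℕ, n + 2 < 2 * i → (S n).coeff i = 0 := by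
  induction n, hn using Nat.le_induction with
  | base =>
    intro i hi
    rw [hS1, Polynomial.coeff_X]
    have : (1:ℕ) ≠ i := by omega
    simp [this]
  | succ m hm ih =>
    intro i hi
    rcases i with _ | j
    · omega
    · rw [andre_coeff_rec S hSrec m hm j]
      rcases Nat.lt_or_ge (m+2) (2*j) with h | h
      · rw [ih j h, ih (j+1) (by omega)]
        ring
      · have hj : 2 * j = m + 2 := by omega
        have : ((m:ℚ) + 2 - 2 * j) = 0 := by
          have : ((2*j : ℕ) : ℚ) = ((m+2 : ℕ) : ℚ) := by rw [hj]
          push_cast at this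
          linarith
        rw [this, ih (j+1) (by omega)]
        ring


theorem term_deriv (d : Derivation ℚ (MvPolynomial (Fin 2) ℚ) (MvPolynomial (Fin 2) ℚ))
    (hx : d (MvPolynomial.X 0) = MvPolynomial.X 1)
    (hy : d (MvPolynomial.X 1) = 1)
    (c : ℚ) (i j : ℕ) :
    MvPolynomial.X 0 * d (MvPolynomial.C c * MvPolynomial.X 0 ^ i * MvPolynomial.X 1 ^ j)
      = (i : MvPolynomial (Fin 2) ℚ) * (MvPolynomial.C c * MvPolynomial.X 0 ^ i * MvPolynomial.X 1 ^ (j+1))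
        + (j : MvPolynomial (Fin 2) ℚ) * (MvPolynomial.C c * MvPolynomial.X 0 ^ (i+1) * MvPolynomial.X 1 ^ (j-1)) := by
  have h1 : MvPolynomial.C c * MvPolynomial.X (0 : Fin 2) ^ i * MvPolynomial.X 1 ^ j
      = c • (MvPolynomial.X 0 ^ i * MvPolynomial.X 1 ^ j) := by
    rw [MvPolynomial.smul_eq_C_mul, mul_assoc]
  rw [h1, Derivation.map_smul, Derivation.leibniz, Derivation.leibniz_pow,
    Derivation.leibniz_pow, hx, hy]
  simp only [smul_eq_mul, nsmul_eq_mul, MvPolynomial.smul_eq_C_mul, mul_one]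
  rcases i with _ | i' <;> rcases j with _ | j' <;>
    simp <;> ring

theorem main_sum (d : Derivation ℚ (MvPolynomial (Fin 2) ℚ) (MvPolynomial (Fin 2) ℚ))
    (hx : d (MvPolynomial.X 0) = MvPolynomial.X 1)
    (hy : d (MvPolynomial.X 1) = 1)
    (S : ℕ → Polynomial ℚ) (hS1 : S 1 = Polynomial.X)
    (hrec : ∀ m : ℕ, 1 ≤ m → ∀ i : ℕ, (S (m+1)).coeff (i+1)
      = ((m:ℚ)+2-2*i) * (S m).coeff i + ((i:ℚ)+1) * (S m).coeff (i+1))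
    (hzero : ∀ n : ℕ, 1 ≤ n → (S n).coeff 0 = 0)
    (hvan : ∀ n : ℕ, 1 ≤ n → ∀ i : ℕ, n + 2 < 2 * i → (S n).coeff i = 0)
    (n : ℕ) (hn : 1 ≤ n) :
    (fun p => MvPolynomial.X 0 * d p)^[n] (MvPolynomial.X 0)
      = ∑ i ∈ Finset.Icc 1 ((n + 2) / 2), MvPolynomial.C ((S n).coeff i)
          * MvPolynomial.X 0 ^ i * MvPolynomial.X 1 ^ (n + 2 - 2 * i) := by
  induction n, hn using Nat.le_induction with
  | base => simp [hS1, hx]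
  | succ n hn ih =>
    have hMle : 2 * ((n+2)/2) ≤ n + 2 := by omega
    set M := (n + 2) / 2 with hM
    -- left-hand side
    rw [Function.iterate_succ_apply', ih]
    show MvPolynomial.X 0 * d _ = _
    rw [map_sum, Finset.mul_sum]
    have step1 : ∑ i ∈ Finset.Icc 1 M, MvPolynomial.X 0 * d (MvPolynomial.C ((S n).coeff i)
          * MvPolynomial.X 0 ^ i * MvPolynomial.X 1 ^ (n + 2 - 2 * i))
        = ∑ i ∈ Finset.Icc 1 M,
            (MvPolynomial.C ((i:ℚ) * (S n).coeff i) * MvPolynomial.X 0 ^ i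
                * MvPolynomial.X 1 ^ (n + 3 - 2 * i)
              + MvPolynomial.C (((n:ℚ)+2-2*i) * (S n).coeff i) * MvPolynomial.X 0 ^ (i+1)
                * MvPolynomial.X 1 ^ (n + 1 - 2 * i)) := by
      refine Finset.sum_congr rfl fun i hi => ?_
      obtain ⟨hi1, hi2⟩ := Finset.mem_Icc.mp hi
      have h2i : 2 * i ≤ n + 2 := by omega
      rw [term_deriv d hx hy, show n+2-2*i+1 = n+3-2*i from by omega,
        show n+2-2*i-1 = n+1-2*i from by omega]
      have c1 : ((i : ℕ) : MvPolynomial (Fin 2) ℚ) = MvPolynomial.C ((i:ℕ):ℚ) := by simp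
      have c2 : ((n+2-2*i : ℕ) : MvPolynomial (Fin 2) ℚ)
          = MvPolynomial.C ((n:ℚ)+2-2*i) := by
        have : (((n+2-2*i : ℕ)) : ℚ) = (n:ℚ)+2-2*i := by
          rw [Nat.cast_sub h2i]; push_cast; ring
        rw [← this]; simp
      rw [c1, c2, map_mul, map_mul]
      ring
    rw [step1, Finset.sum_add_distrib]
    -- reindex second sum
    have hre : (∑ i ∈ Finset.Icc 1 M, MvPolynomial.C (((n:ℚ)+2-2*i) * (S n).coeff i)
            * MvPolynomial.X (0 : Fin 2) ^ (i+1) * MvPolynomial.X 1 ^ (n + 1 - 2 * i))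
        = ∑ i ∈ Finset.Icc 2 (M+1), MvPolynomial.C (((n:ℚ)+4-2*i) * (S n).coeff (i-1))
            * MvPolynomial.X 0 ^ i * MvPolynomial.X 1 ^ (n + 3 - 2 * i) := by
      have heq : Finset.Icc 2 (M+1) = (Finset.Icc 1 M).map (addRightEmbedding 1) := by
        rw [Finset.map_add_right_Icc]
      rw [heq, Finset.sum_map]
      refine Finset.sum_congr rfl fun i hi => ?_
      simp only [addRightEmbedding_apply]
      rw [show n+3-2*(i+1) = n+1-2*i from by omega, show i+1-1 = i from rfl]
      congr 2
      push_cast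
      ring_nf
    rw [hre]
    -- pad both sums to Icc 1 (M+1)
    have pad1 : (∑ i ∈ Finset.Icc 1 M, MvPolynomial.C ((i:ℚ) * (S n).coeff i)
            * MvPolynomial.X (0 : Fin 2) ^ i * MvPolynomial.X 1 ^ (n + 3 - 2 * i))
        = ∑ i ∈ Finset.Icc 1 (M+1), MvPolynomial.C ((i:ℚ) * (S n).coeff i)
            * MvPolynomial.X 0 ^ i * MvPolynomial.X 1 ^ (n + 3 - 2 * i) := by
      refine Finset.sum_subset (Finset.Icc_subset_Icc le_rfl (by omega)) fun i hi hni => ?_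
      obtain ⟨hi1, hi2⟩ := Finset.mem_Icc.mp hi
      have : n + 2 < 2 * i := by
        simp only [Finset.mem_Icc, not_and, not_le] at hni
        have := hni hi1
        omega
      rw [hvan n hn i this, mul_zero, map_zero, zero_mul, zero_mul]
    have pad2 : (∑ i ∈ Finset.Icc 2 (M+1), MvPolynomial.C (((n:ℚ)+4-2*i) * (S n).coeff (i-1))
            * MvPolynomial.X (0 : Fin 2) ^ i * MvPolynomial.X 1 ^ (n + 3 - 2 * i))
        = ∑ i ∈ Finset.Icc 1 (M+1), MvPolynomial.C (((n:ℚ)+4-2*i) * (S n).coeff (i-1))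
            * MvPolynomial.X 0 ^ i * MvPolynomial.X 1 ^ (n + 3 - 2 * i) := by
      refine Finset.sum_subset (Finset.Icc_subset_Icc (by omega) le_rfl) fun i hi hni => ?_
      obtain ⟨hi1, hi2⟩ := Finset.mem_Icc.mp hi
      have hi1' : i = 1 := by
        simp only [Finset.mem_Icc, not_and, not_le] at hni
        omega
      subst hi1'
      rw [show (1:ℕ)-1 = 0 from rfl, hzero n hn, mul_zero, map_zero, zero_mul, zero_mul]
    rw [pad1, pad2, ← Finset.sum_add_distrib]
    -- right-hand side: pad to Icc 1 (M+1)
    have padR : (∑ i ∈ Finset.Icc 1 ((n + 1 + 2) / 2), MvPolynomial.C ((S (n+1)).coeff i)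
            * MvPolynomial.X (0 : Fin 2) ^ i * MvPolynomial.X 1 ^ (n + 1 + 2 - 2 * i))
        = ∑ i ∈ Finset.Icc 1 (M+1), MvPolynomial.C ((S (n+1)).coeff i)
            * MvPolynomial.X 0 ^ i * MvPolynomial.X 1 ^ (n + 1 + 2 - 2 * i) := by
      refine Finset.sum_subset (Finset.Icc_subset_Icc le_rfl (by omega)) fun i hi hni => ?_
      obtain ⟨hi1, hi2⟩ := Finset.mem_Icc.mp hi
      have : n + 1 + 2 < 2 * i := by
        simp only [Finset.mem_Icc, not_and, not_le] at hni
        have := hni hi1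
        omega
      rw [hvan (n+1) (by omega) i this, map_zero, zero_mul, zero_mul]
    rw [padR]
    -- compare termwise
    refine Finset.sum_congr rfl fun i hi => ?_
    obtain ⟨hi1, hi2⟩ := Finset.mem_Icc.mp hi
    obtain ⟨j, rfl⟩ : ∃ j, i = j + 1 := ⟨i - 1, by omega⟩
    rw [hrec n hn j, show n+1+2-2*(j+1) = n+3-2*(j+1) from by omega,
      show j+1-1 = j from rfl, map_add]
    have e1 : ((n:ℚ)+4-2*(((j+1:ℕ)):ℚ)) * (S n).coeff j
        = ((n:ℚ)+2-2*(j:ℚ)) * (S n).coeff j := by push_cast; ring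
    have e2 : (((j+1:ℕ)):ℚ) * (S n).coeff (j+1) = ((j:ℚ)+1) * (S n).coeff (j+1) := by
      push_cast; ring
    rw [e1, e2]
    ring


/-- For the derivation with `D_{G₂}(x) = y`, `D_{G₂}(y) = 1` on `ℚ[x,y]`,
`(x·D_{G₂})^n(x) = ∑_{i=1}^{⌊(n+2)/2⌋} S(n,i) x^i y^{n+2-2i}`, where `S(n,i)` is the
`i`-th coefficient of the André polynomial `S_n` (the number of increasing 0-1-2 trees
on `{0,…,n}` with `i` leaves); in particular the substitution `y = 1` yields the
André polynomial `S_n(x)`. -/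
theorem grammar_andre (d : Derivation ℚ (MvPolynomial (Fin 2) ℚ) (MvPolynomial (Fin 2) ℚ))
    (hx : d (MvPolynomial.X 0) = MvPolynomial.X 1)
    (hy : d (MvPolynomial.X 1) = 1)
    (S : ℕ → Polynomial ℚ) (hS1 : S 1 = Polynomial.X)
    (hSrec : ∀ m : ℕ, 1 ≤ m → S (m + 1) =
        Polynomial.C ((m + 2 : ℕ) : ℚ) * (Polynomial.X * S m)
          + Polynomial.X * (1 - 2 * Polynomial.X) * Polynomial.derivative (S m))
    (n : ℕ) (hn : 1 ≤ n) :
    (fun p => MvPolynomial.X 0 * d p)^[n] (MvPolynomial.X 0)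
      = ∑ i ∈ Finset.Icc 1 ((n + 2) / 2), MvPolynomial.C ((S n).coeff i)
          * MvPolynomial.X 0 ^ i * MvPolynomial.X 1 ^ (n + 2 - 2 * i)
    ∧ MvPolynomial.aeval (fun j : Fin 2 => if j = 0 then (Polynomial.X : Polynomial ℚ) else 1)
        ((fun p => MvPolynomial.X 0 * d p)^[n] (MvPolynomial.X 0)) = S n := by
  have hzero := andre_coeff_zero S hS1 hSrec
  have hvan := andre_coeff_vanish S hS1 hSrec
  have hmain := main_sum d hx hy S hS1 (andre_coeff_rec S hSrec) hzero hvan n hn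
  refine ⟨hmain, ?_⟩
  rw [hmain, map_sum]
  have hterm : ∀ i ∈ Finset.Icc 1 ((n + 2) / 2),
      MvPolynomial.aeval (fun j : Fin 2 => if j = 0 then (Polynomial.X : Polynomial ℚ) else 1)
        (MvPolynomial.C ((S n).coeff i) * MvPolynomial.X 0 ^ i
          * MvPolynomial.X 1 ^ (n + 2 - 2 * i))
      = Polynomial.C ((S n).coeff i) * Polynomial.X ^ i := by
    intro i _
    simp [MvPolynomial.aeval_X, Polynomial.algebraMap_eq]
  rw [Finset.sum_congr rfl hterm]
  ext k
  rw [Polynomial.finset_sum_coeff]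
  simp only [Polynomial.coeff_C_mul, Polynomial.coeff_X_pow, mul_ite, mul_one, mul_zero]
  rw [Finset.sum_ite_eq (Finset.Icc 1 ((n+2)/2)) k fun i => (S n).coeff i]
  by_cases hk : k ∈ Finset.Icc 1 ((n+2)/2)
  · rw [if_pos hk]
  · rw [if_neg hk]
    simp only [Finset.mem_Icc, not_and, not_le] at hk
    rcases Nat.eq_zero_or_pos k with h0 | h1
    · rw [h0, hzero n hn]
    · have : n + 2 < 2 * k := by have := hk h1; omega
      rw [hvan n hn k this]
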